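/- Let N : ℕ → ℕ → ℕ satisfy the recurrence N(ℓ,1) = 1 for all ℓ ≥ 1; N(1,m) = m − 1 for all m ≥ 2; N(ℓ,m) = N(m,m) for all ℓ > m ≥ 2; and N(ℓ,m) = ∑_{j=1}^{m−1} N(ℓ−1,j) for all 2 ≤ ℓ ≤ m. Then for all m ≥ 3 and all ℓ ≥ m − 2, N(ℓ,m) = 2^(m−2). -/

import Mathlib

lemma sumpow_aux : ∀ k, 1 ≤ k →
    (∑ j ∈ Finset.Icc 1 k, if j = 1 then 1 else 2 ^ (j - 2)) = 2 ^ (k - 1) := by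
  intro k hk
  induction k with
  | zero => omega
  | succ n ih =>
    rcases Nat.eq_or_lt_of_le hk with h | h
    · simp [← h]
    · have hn : 1 ≤ n := by omega
      rw [Finset.sum_Icc_succ_top (by omega : 1 ≤ n + 1), ih hn]
      have h1 : n + 1 ≠ 1 := by omega
      simp only [h1, if_false]
      have : n + 1 - 2 = n - 1 := by omega
      rw [this, ← two_mul, ← pow_succ']
      congr 1
      omega

lemma capacity_key
    (N : ℕ → ℕ → ℕ)
    (h1 : ∀ l, 1 ≤ l → N l 1 = 1)
    (h2 : ∀ m, 2 ≤ m → N 1 m = m - 1)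
    (h3 : ∀ l m, 2 ≤ m → m < l → N l m = N m m)
    (h4 : ∀ l m, 2 ≤ l → l ≤ m → N l m = ∑ j ∈ Finset.Icc 1 (m - 1), N (l - 1) j) :
    ∀ m, 2 ≤ m → ∀ l, 1 ≤ l → m - 2 ≤ l → N l m = 2 ^ (m - 2) := by
  intro m
  induction m using Nat.strong_induction_on with
  | _ m ih =>
    intro hm
    have aux : ∀ l, 1 ≤ l → m - 2 ≤ l → l ≤ m → N l m = 2 ^ (m - 2) := by
      intro l hl1 hl2 hl3
      rcases Nat.eq_or_lt_of_le hl1 with h | h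
      · have hl : l = 1 := h.symm
        subst hl
        have hNm := h2 m hm
        have : m = 2 ∨ m = 3 := by omega
        rcases this with rfl | rfl <;> simp [hNm]
      · have hl2' : 2 ≤ l := h
        rw [h4 l m hl2' hl3]
        have hterm : ∀ j ∈ Finset.Icc 1 (m - 1),
            N (l - 1) j = if j = 1 then 1 else 2 ^ (j - 2) := by
          intro j hj
          simp only [Finset.mem_Icc] at hj
          by_cases hj1 : j = 1
          · subst hj1
            simp only [if_true]
            exact h1 (l - 1) (by omega)
          · simp only [hj1, if_false]
            exact ih j (by omega) (by omega) (l - 1) (by omega) (by omega)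
        rw [Finset.sum_congr rfl hterm, sumpow_aux (m - 1) (by omega)]
        congr 1
    intro l hl1 hl2
    by_cases hlm : l ≤ m
    · exact aux l hl1 hl2 hlm
    · rw [h3 l m hm (by omega)]
      exact aux m (by omega) (by omega) le_rfl

theorem capacity_saturation
    (N : ℕ → ℕ → ℕ)
    (h1 : ∀ l, 1 ≤ l → N l 1 = 1)
    (h2 : ∀ m, 2 ≤ m → N 1 m = m - 1)
    (h3 : ∀ l m, 2 ≤ m → m < l → N l m = N m m)
    (h4 : ∀ l m, 2 ≤ l → l ≤ m → N l m = ∑ j ∈ Finset.Icc 1 (m - 1), N (l - 1) j) :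
    ∀ m, 3 ≤ m → ∀ l, m - 2 ≤ l → N l m = 2 ^ (m - 2) := by
  intro m hm l hl
  exact capacity_key N h1 h2 h3 h4 m (by omega) l (by omega) hl
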